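/- Let V be a finite-dimensional real inner product space, and let P and Q be orthogonal projections on V. Suppose 0 ≤ p < 1 and every non-zero eigenvalue of P + Q is at least 1 - p. Then for every f ∈ V, ⟨Pf, Qf⟩ ≥ -p · ‖Pf‖ · ‖Qf‖. -/

import Mathlib

open scoped RealInnerProductSpace

section Aux

variable {V : Type*} [NormedAddCommGroup V] [InnerProductSpace ℝ V]

lemma aux_inner_proj (P : V →ₗ[ℝ] V) (hPidem : P ∘ₗ P = P)
    (hPsym : LinearMap.IsSymmetric P) (v : V) : ⟪P v, v⟫ = ‖P v‖ ^ 2 := by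
  have hPP : P (P v) = P v := by
    simpa using LinearMap.ext_iff.mp hPidem v
  have h1 : ⟪P v, P v⟫ = ⟪v, P (P v)⟫ := hPsym v (P v)
  rw [hPP] at h1
  have h2 : ⟪P v, v⟫ = ⟪P v, P v⟫ := by rw [real_inner_comm]; exact h1.symm
  rw [h2, real_inner_self_eq_norm_sq]

lemma aux_norm_proj_le (P : V →ₗ[ℝ] V) (hPidem : P ∘ₗ P = P)
    (hPsym : LinearMap.IsSymmetric P) (v : V) : ‖P v‖ ≤ ‖v‖ := by
  have h1 := aux_inner_proj P hPidem hPsym v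
  have h2 : ⟪P v, v⟫ ≤ ‖P v‖ * ‖v‖ := real_inner_le_norm _ _
  rcases eq_or_lt_of_le (norm_nonneg (P v)) with h | h
  · rw [← h]; exact norm_nonneg v
  · nlinarith

lemma aux_proj_eq_of_norm_eq (P : V →ₗ[ℝ] V) (hPidem : P ∘ₗ P = P)
    (hPsym : LinearMap.IsSymmetric P) (v : V) (h : ‖P v‖ = ‖v‖) : P v = v := by
  have h1 : ⟪v, P v⟫ = ‖P v‖ ^ 2 := by
    rw [real_inner_comm]; exact aux_inner_proj P hPidem hPsym v
  have h2 : ‖v - P v‖ ^ 2 = ‖v‖ ^ 2 - 2 * ⟪v, P v⟫ + ‖P v‖ ^ 2 := by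
    rw [← norm_sub_sq_real]
  rw [h1, h] at h2
  have h3 : ‖v - P v‖ ^ 2 = 0 := by ring_nf; ring_nf at h2; linarith
  have h4 : v - P v = 0 := by
    rwa [pow_eq_zero_iff (by norm_num), norm_eq_zero] at h3
  rw [sub_eq_zero] at h4
  exact h4.symm

end Aux

set_option maxHeartbeats 1000000 in
theorem stmt_0 {V : Type*} [NormedAddCommGroup V] [InnerProductSpace ℝ V]
    [FiniteDimensional ℝ V]
    (P Q : V →ₗ[ℝ] V)
    (hPidem : P ∘ₗ P = P) (hPsym : LinearMap.IsSymmetric P)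
    (hQidem : Q ∘ₗ Q = Q) (hQsym : LinearMap.IsSymmetric Q)
    (p : ℝ) (hp0 : 0 ≤ p) (hp1 : p < 1)
    (hev : ∀ μ : ℝ, μ ≠ 0 → Module.End.HasEigenvalue (P + Q) μ → 1 - p ≤ μ)
    (f : V) :
    ⟪P f, Q f⟫ ≥ -p * ‖P f‖ * ‖Q f‖ := by
  have hPP : ∀ v, P (P v) = P v := fun v => by
    simpa using LinearMap.ext_iff.mp hPidem v
  have hQQ : ∀ v, Q (Q v) = Q v := fun v => by
    simpa using LinearMap.ext_iff.mp hQidem v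
  set U : Submodule ℝ V := LinearMap.range P ⊓ LinearMap.range Q with hUdef
  set W : Submodule ℝ V := LinearMap.ker P ⊓ LinearMap.ker Q with hWdef
  set M : Submodule ℝ V := (U ⊔ W)ᗮ with hMdef
  -- basic membership facts
  have hUP : ∀ v ∈ U, P v = v ∧ Q v = v := by
    rintro v ⟨⟨a, ha⟩, ⟨b, hb⟩⟩
    constructor
    · rw [← ha, hPP, ha]
    · rw [← hb, hQQ, hb]
  have hWP : ∀ v ∈ W, P v = 0 ∧ Q v = 0 := by
    rintro v ⟨h1, h2⟩
    exact ⟨h1, h2⟩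
  have hker : ∀ v, P v + Q v = 0 → v ∈ W := by
    intro v hv
    have h1 : ⟪P v + Q v, v⟫ = 0 := by rw [hv, inner_zero_left]
    rw [inner_add_left, aux_inner_proj P hPidem hPsym, aux_inner_proj Q hQidem hQsym] at h1
    have hP0 : ‖P v‖ = 0 := by nlinarith [norm_nonneg (P v), norm_nonneg (Q v)]
    have hQ0 : ‖Q v‖ = 0 := by nlinarith [norm_nonneg (P v), norm_nonneg (Q v)]
    exact ⟨norm_eq_zero.mp hP0, norm_eq_zero.mp hQ0⟩
  have htwo : ∀ v, P v + Q v = (2:ℝ) • v → v ∈ U := by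
    intro v hv
    have h1 : ‖P v + Q v‖ = 2 * ‖v‖ := by
      rw [hv, norm_smul]; simp
    have h2 : ‖P v‖ ≤ ‖v‖ := aux_norm_proj_le P hPidem hPsym v
    have h3 : ‖Q v‖ ≤ ‖v‖ := aux_norm_proj_le Q hQidem hQsym v
    have h4 : ‖P v + Q v‖ ≤ ‖P v‖ + ‖Q v‖ := norm_add_le _ _
    have hP : P v = v := aux_proj_eq_of_norm_eq P hPidem hPsym v (by linarith)
    have hQ : Q v = v := aux_proj_eq_of_norm_eq Q hQidem hQsym v (by linarith)
    exact ⟨⟨v, hP⟩, ⟨v, hQ⟩⟩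
  -- invariance of M
  have hUWmem : ∀ x ∈ U ⊔ W, P x ∈ U ⊔ W ∧ Q x ∈ U ⊔ W := by
    intro x hx
    obtain ⟨a, ha, c, hc, rfl⟩ := Submodule.mem_sup.mp hx
    obtain ⟨haP, haQ⟩ := hUP a ha
    obtain ⟨hcP, hcQ⟩ := hWP c hc
    constructor
    · rw [map_add, haP, hcP, add_zero]
      exact Submodule.mem_sup_left ha
    · rw [map_add, haQ, hcQ, add_zero]
      exact Submodule.mem_sup_left ha
  have hMP : ∀ v ∈ M, P v ∈ M := by
    intro v hv
    rw [hMdef, Submodule.mem_orthogonal]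
    intro x hx
    have h1 : ⟪P x, v⟫ = ⟪x, P v⟫ := hPsym x v
    rw [← h1]
    exact hv.out (P x) (hUWmem x hx).1
  have hMQ : ∀ v ∈ M, Q v ∈ M := by
    intro v hv
    rw [hMdef, Submodule.mem_orthogonal]
    intro x hx
    have h1 : ⟪Q x, v⟫ = ⟪x, Q v⟫ := hQsym x v
    rw [← h1]
    exact hv.out (Q x) (hUWmem x hx).2
  have hMT : ∀ v ∈ M, (P + Q) v ∈ M := by
    intro v hv
    simp only [LinearMap.add_apply]
    exact Submodule.add_mem M (hMP v hv) (hMQ v hv)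
  -- restriction of T to M
  set T' : M →ₗ[ℝ] M := (P + Q).restrict hMT with hT'def
  have hT'sym : LinearMap.IsSymmetric T' := by
    intro x y
    rw [Submodule.coe_inner, Submodule.coe_inner]
    rw [hT'def, LinearMap.restrict_coe_apply, LinearMap.restrict_coe_apply]
    exact (hPsym.add hQsym) (x : V) (y : V)
  have hn : Module.finrank ℝ M = Module.finrank ℝ M := rfl
  set b := hT'sym.eigenvectorBasis hn with hbdef
  set ν := hT'sym.eigenvalues hn with hνdef
  -- eigenvalue bounds
  have hνbound : ∀ i, |ν i - 1| ≤ p := by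
    intro i
    have hevec := hT'sym.hasEigenvector_eigenvectorBasis hn i
    have he0 : (b i : V) ≠ 0 := fun h => hevec.2 (Subtype.coe_injective (by simpa using h))
    set e : V := (b i : V) with hedef
    have heM : e ∈ M := (b i).2
    have hTe : P e + Q e = ν i • e := by
      have h1 : T' (b i) = ν i • b i := hT'sym.apply_eigenvectorBasis hn i
      have h2 := congrArg (Subtype.val) h1
      rw [hT'def, LinearMap.restrict_coe_apply] at h2
      simpa using h2
    have hnorme : 0 < ‖e‖ := norm_pos_iff.mpr he0
    -- ν i ≠ 0
    have hν0 : ν i ≠ 0 := by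
      intro h0
      rw [h0, zero_smul] at hTe
      have heW : e ∈ W := hker e hTe
      have : ⟪e, e⟫ = 0 := heM.out e (Submodule.mem_sup_right heW)
      exact he0 (inner_self_eq_zero.mp this)
    -- eigenvalue of T
    have hevT : Module.End.HasEigenvalue (P + Q) (ν i) := by
      apply Module.End.hasEigenvalue_of_hasEigenvector (x := e)
      refine ⟨Module.End.mem_eigenspace_iff.mpr ?_, he0⟩
      simpa using hTe
    have h1p : 1 - p ≤ ν i := hev (ν i) hν0 hevT
    -- ν i ≠ 2
    have hν2 : ν i ≠ 2 := by
      intro h2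
      rw [h2] at hTe
      have heU : e ∈ U := htwo e hTe
      have : ⟪e, e⟫ = 0 := heM.out e (Submodule.mem_sup_left heU)
      exact he0 (inner_self_eq_zero.mp this)
    -- ν i ≤ 2
    have hinnerPe : ⟪P e, e⟫ = ‖P e‖ ^ 2 := aux_inner_proj P hPidem hPsym e
    have hinnerQe : ⟪Q e, e⟫ = ‖Q e‖ ^ 2 := aux_inner_proj Q hQidem hQsym e
    have hsum : ‖P e‖ ^ 2 + ‖Q e‖ ^ 2 = ν i * ‖e‖ ^ 2 := by
      have h1 : ⟪P e + Q e, e⟫ = ν i * ‖e‖ ^ 2 := by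
        rw [hTe, real_inner_smul_left, real_inner_self_eq_norm_sq]
      rw [inner_add_left, hinnerPe, hinnerQe] at h1
      exact h1
    have hle2 : ν i ≤ 2 := by
      have h2 : ‖P e‖ ≤ ‖e‖ := aux_norm_proj_le P hPidem hPsym e
      have h3 : ‖Q e‖ ≤ ‖e‖ := aux_norm_proj_le Q hQidem hQsym e
      have he2 : 0 < ‖e‖ ^ 2 := by positivity
      nlinarith [pow_le_pow_left₀ (norm_nonneg (P e)) h2 2,
        pow_le_pow_left₀ (norm_nonneg (Q e)) h3 2, he2]
    have hlt2 : ν i < 2 := lt_of_le_of_ne hle2 hν2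
    have hνpos : 0 < ν i := by linarith
    -- inner product of P e and Q e
    have hPQinner : 2 * ⟪P e, Q e⟫ = (ν i ^ 2 - ν i) * ‖e‖ ^ 2 := by
      have h1 : ‖P e + Q e‖ ^ 2 = ν i ^ 2 * ‖e‖ ^ 2 := by
        rw [hTe, norm_smul, Real.norm_eq_abs, mul_pow, sq_abs]
      have h2 : ‖P e + Q e‖ ^ 2 = ‖P e‖ ^ 2 + 2 * ⟪P e, Q e⟫ + ‖Q e‖ ^ 2 := by
        rw [← norm_add_sq_real]
      nlinarith
    -- the paired eigenvector
    set d : V := P e - Q e with hddef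
    have hd2 : ‖d‖ ^ 2 = (2 * ν i - ν i ^ 2) * ‖e‖ ^ 2 := by
      have h1 : ‖d‖ ^ 2 = ‖P e‖ ^ 2 - 2 * ⟪P e, Q e⟫ + ‖Q e‖ ^ 2 := by
        rw [hddef, ← norm_sub_sq_real]
      nlinarith
    have hd0 : d ≠ 0 := by
      intro h0
      have hz : ‖d‖ ^ 2 = 0 := by rw [h0, norm_zero]; ring
      rw [hd2] at hz
      have he2 : 0 < ‖e‖ ^ 2 := by positivity
      have h22 : 0 < 2 - ν i := by linarith
      have heq : (2 * ν i - ν i ^ 2) * ‖e‖ ^ 2 = ν i * (2 - ν i) * ‖e‖ ^ 2 := by ring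
      rw [heq] at hz
      have := mul_pos (mul_pos hνpos h22) he2
      linarith
    have hTd : (P + Q) d = (2 - ν i) • d := by
      have hνPe : ν i • P e = P e + P (Q e) := by
        have : P (ν i • e) = P (P e + Q e) := by rw [hTe]
        rw [map_smul, map_add, hPP] at this
        exact this
      have hνQe : ν i • Q e = Q (P e) + Q e := by
        have : Q (ν i • e) = Q (P e + Q e) := by rw [hTe]
        rw [map_smul, map_add, hQQ] at this
        exact this
      have hlhs : (P + Q) d = P e - P (Q e) + Q (P e) - Q e := by
        simp only [hddef, LinearMap.add_apply, map_sub, hPP, hQQ]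
        abel
      have hrhs : (2 - ν i) • d =
          (P e - Q e) + (P e - Q e) - ((P e + P (Q e)) - (Q (P e) + Q e)) := by
        rw [hddef, sub_smul, two_smul, smul_sub, hνPe, hνQe]
      rw [hlhs, hrhs]
      abel
    have hevT2 : Module.End.HasEigenvalue (P + Q) (2 - ν i) := by
      apply Module.End.hasEigenvalue_of_hasEigenvector (x := d)
      exact ⟨Module.End.mem_eigenspace_iff.mpr hTd, hd0⟩
    have h2ν0 : (2 : ℝ) - ν i ≠ 0 := by
      intro h; apply hν2; linarith
    have h2p : 1 - p ≤ 2 - ν i := hev _ h2ν0 hevT2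
    rw [abs_le]
    constructor <;> linarith
  -- key norm bound on M
  have hkey : ∀ m : M, ‖P (m : V) + Q (m : V) - (m : V)‖ ≤ p * ‖(m : V)‖ := by
    intro m
    set x : M := T' m - m with hxdef
    have hxcoe : (x : V) = P (m : V) + Q (m : V) - (m : V) := by
      rw [hxdef]
      push_cast [hT'def, LinearMap.restrict_coe_apply]
      simp
    have hrepr : ∀ i, b.repr x i = (ν i - 1) * b.repr m i := by
      intro i
      rw [hxdef, map_sub]
      have h1 : b.repr (T' m) i = ν i * b.repr m i :=
        hT'sym.eigenvectorBasis_apply_self_apply hn m i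
      simp [h1]
      ring
    have hnx : ‖(x : V)‖ = ‖b.repr x‖ := by
      rw [show ‖(x : V)‖ = ‖x‖ from rfl]
      exact (b.repr.norm_map x).symm
    have hnm : ‖(m : V)‖ = ‖b.repr m‖ := by
      rw [show ‖(m : V)‖ = ‖m‖ from rfl]
      exact (b.repr.norm_map m).symm
    have hxle : ‖b.repr x‖ ≤ p * ‖b.repr m‖ := by
      rw [EuclideanSpace.norm_eq, EuclideanSpace.norm_eq]
      rw [← Real.sqrt_sq hp0, ← Real.sqrt_mul (by positivity)]
      apply Real.sqrt_le_sqrt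
      rw [Finset.mul_sum]
      apply Finset.sum_le_sum
      intro i _
      rw [hrepr i]
      have hb := abs_le.mp (hνbound i)
      have : (ν i - 1) ^ 2 ≤ p ^ 2 := sq_le_sq' hb.1 hb.2
      have h2 : ‖(ν i - 1) * b.repr m i‖ ^ 2 = (ν i - 1) ^ 2 * ‖b.repr m i‖ ^ 2 := by
        rw [norm_mul, mul_pow]
        simp [sq_abs]
      rw [h2]
      nlinarith [sq_nonneg (‖b.repr m i‖)]
    calc ‖P (m : V) + Q (m : V) - (m : V)‖ = ‖(x : V)‖ := by rw [hxcoe]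
      _ = ‖b.repr x‖ := hnx
      _ ≤ p * ‖b.repr m‖ := hxle
      _ = p * ‖(m : V)‖ := by rw [← hnm]
  -- decompose f
  set h0 : V := (Submodule.orthogonalProjection (U ⊔ W) f : V) with hh0def
  have hh0 : h0 ∈ U ⊔ W := Submodule.coe_mem _
  set g : V := f - h0 with hgdef
  have hgM : g ∈ M := Submodule.sub_starProjection_mem_orthogonal (K := U ⊔ W) f
  obtain ⟨u, hu, w, hw, huw⟩ := Submodule.mem_sup.mp hh0
  have hf : f = u + w + g := by rw [hgdef, huw]; abel
  obtain ⟨huP, huQ⟩ := hUP u hu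
  obtain ⟨hwP, hwQ⟩ := hWP w hw
  have hPf : P f = u + P g := by
    rw [hf, map_add, map_add, huP, hwP, add_zero]
  have hQf : Q f = u + Q g := by
    rw [hf, map_add, map_add, huQ, hwQ, add_zero]
  have hPgM : P g ∈ M := hMP g hgM
  have hQgM : Q g ∈ M := hMQ g hgM
  have hUmem : u ∈ U ⊔ W := Submodule.mem_sup_left hu
  have huPg : ⟪u, P g⟫ = 0 := hPgM.out u hUmem
  have huQg : ⟪u, Q g⟫ = 0 := hQgM.out u hUmem
  -- norms
  have hnPf : ‖P f‖ ^ 2 = ‖u‖ ^ 2 + ‖P g‖ ^ 2 := by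
    rw [hPf, norm_add_sq_real, huPg]; ring
  have hnQf : ‖Q f‖ ^ 2 = ‖u‖ ^ 2 + ‖Q g‖ ^ 2 := by
    rw [hQf, norm_add_sq_real, huQg]; ring
  -- inner product decomposition
  have hinnerdec : ⟪P f, Q f⟫ = ‖u‖ ^ 2 + ⟪P g, Q g⟫ := by
    have hPgu : ⟪P g, u⟫ = 0 := by rw [real_inner_comm]; exact huPg
    rw [hPf, hQf, inner_add_left, inner_add_right, inner_add_right, huQg, hPgu,
      real_inner_self_eq_norm_sq]
    ring
  -- bound on ⟪P g, Q g⟫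
  have hQPg : ‖Q (P g)‖ ≤ p * ‖P g‖ := by
    have h1 : Q (P g) = P (P g) + Q (P g) - P g := by rw [hPP]; abel
    rw [h1]
    exact hkey ⟨P g, hPgM⟩
  have hinnerPgQg : ⟪P g, Q g⟫ ≥ -(p * ‖P g‖ * ‖Q g‖) := by
    have h1 : ⟪P g, Q g⟫ = ⟪Q (P g), Q g⟫ := by
      have h2 : ⟪Q (P g), Q g⟫ = ⟪P g, Q (Q g)⟫ := hQsym (P g) (Q g)
      rw [h2, hQQ]
    rw [h1]
    have h3 : |⟪Q (P g), Q g⟫| ≤ ‖Q (P g)‖ * ‖Q g‖ := abs_real_inner_le_norm _ _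
    have h4 : ‖Q (P g)‖ * ‖Q g‖ ≤ p * ‖P g‖ * ‖Q g‖ :=
      mul_le_mul_of_nonneg_right hQPg (norm_nonneg _)
    have h5 := (abs_le.mp h3).1
    linarith
  -- conclude
  have hPgle : ‖P g‖ ≤ ‖P f‖ := by
    nlinarith [norm_nonneg (P f), norm_nonneg (P g), sq_nonneg ‖u‖]
  have hQgle : ‖Q g‖ ≤ ‖Q f‖ := by
    nlinarith [norm_nonneg (Q f), norm_nonneg (Q g), sq_nonneg ‖u‖]
  have hprodle : p * ‖P g‖ * ‖Q g‖ ≤ p * ‖P f‖ * ‖Q f‖ := by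
    apply mul_le_mul (mul_le_mul_of_nonneg_left hPgle hp0) hQgle (norm_nonneg _)
    positivity
  rw [hinnerdec]
  nlinarith [sq_nonneg ‖u‖]
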